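/- For d ≥ 4 and any N > 0 there exists a lattice simplex in R^d whose only lattice points are its vertices and whose volume exceeds N. Concretely, for pairwise coprime positive integers a, b, c, the simplex P = conv(0, e_1, e_2, e_1+e_2+a·e_3, e_1+e_2+b·e_4, e_1+e_2+c·e_5) ⊆ R^5 contains no lattice points other than its six vertices, while its normalized volume is a·b·c. -/

import Mathlib

/-- The vertices `0, e₁, e₂, e₁+e₂+a·e₃, e₁+e₂+b·e₄, e₁+e₂+c·e₅` of the simplex
`P ⊆ ℝ^5`. -/
noncomputable def reeveVerts (a b c : ℕ) : Fin 6 → Fin 5 → ℝ :=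
  ![0, Pi.single 0 1, Pi.single 1 1,
    Pi.single 0 1 + Pi.single 1 1 + (a : ℝ) • (Pi.single 2 1 : Fin 5 → ℝ),
    Pi.single 0 1 + Pi.single 1 1 + (b : ℝ) • (Pi.single 3 1 : Fin 5 → ℝ),
    Pi.single 0 1 + Pi.single 1 1 + (c : ℝ) • (Pi.single 4 1 : Fin 5 → ℝ)]

open Finset


noncomputable def genVerts (k : ℕ) (a : Fin k → ℕ) : Fin (k + 3) → Fin (k + 2) → ℝ :=
  Fin.cons 0 (Fin.cons (Pi.single 0 1) (Fin.cons (Pi.single 1 1)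
    (fun j => Pi.single 0 1 + Pi.single 1 1 +
      (a j : ℝ) • (Pi.single j.succ.succ 1 : Fin (k + 2) → ℝ))))

namespace genVerts

variable {k : ℕ} {a : Fin k → ℕ}

-- index abbreviations
def I1 : Fin (k + 3) := Fin.succ 0
def I2 : Fin (k + 3) := Fin.succ (Fin.succ 0)
def I3 (j : Fin k) : Fin (k + 3) := Fin.succ (Fin.succ (Fin.succ j))

@[simp] lemma ssne1 (x : Fin k) : (x.succ.succ : Fin (k + 2)) ≠ 1 := by
  simp [Fin.ext_iff]
@[simp] lemma ssne1' (x : Fin k) : (1 : Fin (k + 2)) ≠ x.succ.succ := (ssne1 x).symm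

@[simp] lemma v0 : genVerts k a 0 = 0 := rfl
@[simp] lemma v1 : genVerts k a I1 = Pi.single 0 1 := rfl
@[simp] lemma v2 : genVerts k a I2 = Pi.single 1 1 := rfl
@[simp] lemma v3 (j : Fin k) :
    genVerts k a (I3 j) = Pi.single 0 1 + Pi.single 1 1 +
      (a j : ℝ) • (Pi.single j.succ.succ 1 : Fin (k + 2) → ℝ) := rfl

lemma sum_expand (f : Fin (k + 3) → ℝ) :
    ∑ i, f i = f 0 + f I1 + f I2 + ∑ j, f (I3 j) := by
  rw [Fin.sum_univ_succ, Fin.sum_univ_succ, Fin.sum_univ_succ]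
  simp [I1, I2, I3]
  ring

lemma sum_expandV (f : Fin (k + 3) → (Fin (k+2) → ℝ)) :
    ∑ i, f i = f 0 + f I1 + f I2 + ∑ j, f (I3 j) := by
  rw [Fin.sum_univ_succ, Fin.sum_univ_succ, Fin.sum_univ_succ]
  simp [I1, I2, I3]
  abel

lemma coord0 (l : Fin (k + 3) → ℝ) :
    (∑ i, l i • genVerts k a i) 0 = l I1 + ∑ j, l (I3 j) := by
  rw [sum_expandV (fun i => l i • genVerts k a i)]
  simp [Finset.sum_apply, Pi.single_apply, Fin.succ_ne_zero]

lemma coord1 (l : Fin (k + 3) → ℝ) :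
    (∑ i, l i • genVerts k a i) (Fin.succ 0) = l I2 + ∑ j, l (I3 j) := by
  rw [sum_expandV (fun i => l i • genVerts k a i)]
  simp [Finset.sum_apply, Pi.single_apply, (Fin.succ_ne_zero 0).symm, Fin.succ_ne_zero,
    Fin.succ_inj]

lemma coordS (l : Fin (k + 3) → ℝ) (j : Fin k) :
    (∑ i, l i • genVerts k a i) j.succ.succ = (a j : ℝ) * l (I3 j) := by
  rw [sum_expandV (fun i => l i • genVerts k a i)]
  simp [Finset.sum_apply, Pi.single_apply, (Fin.succ_ne_zero j.succ).symm, Fin.succ_inj,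
    (Fin.succ_ne_zero j).symm, mul_comm]


theorem hollow (k : ℕ) (a : Fin k → ℕ) (ha : ∀ j, 0 < a j)
    (hco : ∀ i j, i ≠ j → Nat.Coprime (a i) (a j)) :
    ∀ x ∈ convexHull ℝ (Set.range (genVerts k a)),
      (∀ c, ∃ n : ℤ, x c = n) → ∃ i, x = genVerts k a i := by
  intro x hx hint
  rw [convexHull_range_eq_exists_affineCombination] at hx
  obtain ⟨s, w, hw0, hw1, hxw⟩ := hx
  set l : Fin (k + 3) → ℝ := fun i => if i ∈ s then w i else 0 with hl
  have hl0 : ∀ i, 0 ≤ l i := by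
    intro i; by_cases h : i ∈ s <;> simp [hl, h] <;> exact hw0 i h
  have hl1 : ∑ i, l i = 1 := by
    rw [← hw1]; simp [hl, Finset.sum_ite_mem, Finset.univ_inter]
  have hxl : x = ∑ i, l i • genVerts k a i := by
    rw [← hxw, Finset.affineCombination_eq_linear_combination _ _ _ hw1]
    have h2 : ∀ i ∈ Finset.univ, l i • genVerts k a i
        = if i ∈ s then w i • genVerts k a i else 0 := by
      intro i _; by_cases h : i ∈ s <;> simp [hl, h]
    rw [Finset.sum_congr rfl h2, Finset.sum_ite_mem, Finset.univ_inter]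
  set S : ℝ := ∑ j, l (I3 j) with hSdef
  have hS0 : 0 ≤ S := Finset.sum_nonneg fun j _ => hl0 _
  have hsum : l 0 + l I1 + l I2 + S = 1 := by rw [← hl1, sum_expand]
  have hx0 : x 0 = l I1 + S := by rw [hxl]; exact coord0 l
  have hx1 : x (Fin.succ 0) = l I2 + S := by rw [hxl]; exact coord1 l
  have hxS : ∀ j, x j.succ.succ = a j * l (I3 j) := by
    intro j; rw [hxl]; exact coordS l j
  obtain ⟨n0, hn0⟩ := hint 0
  obtain ⟨n1, hn1⟩ := hint (Fin.succ 0)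
  have hb0 : n0 = 0 ∨ n0 = 1 := by
    have h1 : (0 : ℝ) ≤ n0 := by rw [← hn0, hx0]; exact add_nonneg (hl0 _) hS0
    have h2 : (n0 : ℝ) ≤ 1 := by
      rw [← hn0, hx0]; have := hl0 0; have := hl0 I2; linarith
    have h1' : (0 : ℤ) ≤ n0 := by exact_mod_cast h1
    have h2' : (n0 : ℤ) ≤ 1 := by exact_mod_cast h2
    omega
  have hb1 : n1 = 0 ∨ n1 = 1 := by
    have h1 : (0 : ℝ) ≤ n1 := by rw [← hn1, hx1]; exact add_nonneg (hl0 _) hS0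
    have h2 : (n1 : ℝ) ≤ 1 := by
      rw [← hn1, hx1]; have := hl0 0; have := hl0 I1; linarith
    have h1' : (0 : ℤ) ≤ n1 := by exact_mod_cast h1
    have h2' : (n1 : ℤ) ≤ 1 := by exact_mod_cast h2
    omega
  rcases hb0 with h0 | h0
  · -- x 0 = 0 : x is 0 or e2
    have hz : l I1 + S = 0 := by rw [← hx0, hn0, h0]; norm_num
    have hI1z : l I1 = 0 := le_antisymm (by linarith [hl0 I1]) (hl0 I1)
    have hSz : S = 0 := by linarith [hl0 I1]
    have hμz : ∀ j, l (I3 j) = 0 := by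
      intro j
      have := (Finset.sum_eq_zero_iff_of_nonneg (fun j _ => hl0 (I3 j))).mp hSz
      exact this j (Finset.mem_univ j)
    have hxe : x = l I2 • genVerts k a I2 := by
      rw [hxl, sum_expandV (fun i => l i • genVerts k a i)]
      simp [hI1z, hμz]
    have hI2v : l I2 = (n1 : ℝ) := by rw [← hn1, hx1, hSz, add_zero]
    rcases hb1 with h1 | h1
    · refine ⟨0, ?_⟩
      rw [hxe, hI2v, h1]; simp
    · refine ⟨I2, ?_⟩
      rw [hxe, hI2v, h1]; simp
  rcases hb1 with h1 | h1
  · -- x 1 = 0, x 0 = 1 : x = e1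
    have hz : l I2 + S = 0 := by rw [← hx1, hn1, h1]; norm_num
    have hI2z : l I2 = 0 := le_antisymm (by linarith [hl0 I2]) (hl0 I2)
    have hSz : S = 0 := by linarith [hl0 I2]
    have hμz : ∀ j, l (I3 j) = 0 := by
      intro j
      have := (Finset.sum_eq_zero_iff_of_nonneg (fun j _ => hl0 (I3 j))).mp hSz
      exact this j (Finset.mem_univ j)
    have hxe : x = l I1 • genVerts k a I1 := by
      rw [hxl, sum_expandV (fun i => l i • genVerts k a i)]
      simp [hI2z, hμz]
    have hI1v : l I1 = 1 := by
      have : l I1 = (n0 : ℝ) := by rw [← hn0, hx0, hSz, add_zero]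
      rw [this, h0]; norm_num
    exact ⟨I1, by rw [hxe, hI1v, one_smul]⟩
  · -- main case : x 0 = x 1 = 1
    have e0 : l I1 + S = 1 := by rw [← hx0, hn0, h0]; norm_num
    have e1 : l I2 + S = 1 := by rw [← hx1, hn1, h1]; norm_num
    have hS1 : S = 1 := by
      have := hl0 0; have := hl0 I1; linarith
    have hI1z : l I1 = 0 := by linarith
    have hI2z : l I2 = 0 := by linarith
    have hl0z : l 0 = 0 := by linarith
    have hμle : ∀ j, l (I3 j) ≤ 1 := by
      intro j
      have := Finset.single_le_sum (f := fun j => l (I3 j))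
        (fun i _ => hl0 (I3 i)) (Finset.mem_univ j)
      rw [← hSdef] at this; linarith
    choose n hn using fun j : Fin k => hint j.succ.succ
    set A : ℕ := ∏ i, a i with hA
    set B : Fin k → ℕ := fun j => ∏ i ∈ Finset.univ.erase j, a i with hB
    have hAB : ∀ j, a j * B j = A := fun j =>
      Finset.mul_prod_erase Finset.univ a (Finset.mem_univ j)
    have hR : (∑ i, (n i : ℝ) * B i) = (A : ℝ) := by
      have h3 : ∀ i, (n i : ℝ) * B i = l (I3 i) * A := by
        intro i
        rw [← hn i, hxS i, ← hAB i]
        push_cast; ring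
      rw [Finset.sum_congr rfl fun i _ => h3 i, ← Finset.sum_mul, ← hSdef, hS1, one_mul]
    have hZ : (∑ i, n i * (B i : ℤ)) = (A : ℤ) := by exact_mod_cast hR
    have key : ∀ j, l (I3 j) = 0 ∨ l (I3 j) = 1 := by
      intro j
      have hdvdA : (a j : ℤ) ∣ (A : ℤ) :=
        Int.natCast_dvd_natCast.mpr ⟨B j, (hAB j).symm⟩
      have hdvdRest : (a j : ℤ) ∣ ∑ i ∈ Finset.univ.erase j, n i * (B i : ℤ) := by
        refine Finset.dvd_sum fun i hi => Dvd.dvd.mul_left ?_ (n i)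
        have hij : j ≠ i := fun h => (Finset.mem_erase.mp hi).1 h.symm
        have : a j ∣ B i := Finset.dvd_prod_of_mem a
          (Finset.mem_erase.mpr ⟨hij, Finset.mem_univ j⟩)
        exact_mod_cast Int.natCast_dvd_natCast.mpr this
      have hsplit : n j * (B j : ℤ) + ∑ i ∈ Finset.univ.erase j, n i * (B i : ℤ)
          = (A : ℤ) := by
        rw [Finset.add_sum_erase Finset.univ (fun i => n i * (B i : ℤ)) (Finset.mem_univ j)]
        exact hZ
      have hdvd : (a j : ℤ) ∣ n j * (B j : ℤ) := by
        have : n j * (B j : ℤ) = A - ∑ i ∈ Finset.univ.erase j, n i * (B i : ℤ) := by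
          linarith [hsplit]
        rw [this]; exact dvd_sub hdvdA hdvdRest
      have hcop : IsCoprime (a j : ℤ) ((B j : ℕ) : ℤ) := by
        rw [Nat.isCoprime_iff_coprime]
        exact Nat.Coprime.prod_right fun i hi =>
          hco j i fun h => (Finset.mem_erase.mp hi).1 h.symm
      have hdj : (a j : ℤ) ∣ n j := hcop.dvd_of_dvd_mul_right hdvd
      obtain ⟨t, ht⟩ := hdj
      have haj : (a j : ℝ) ≠ 0 := (Nat.cast_pos.mpr (ha j)).ne'
      have hμt : l (I3 j) = (t : ℝ) := by
        have h4 : (a j : ℝ) * l (I3 j) = (a j : ℝ) * t := by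
          rw [← hxS j, hn j, ht]; push_cast; ring
        exact mul_left_cancel₀ haj h4
      have ht0 : (0 : ℝ) ≤ t := by rw [← hμt]; exact hl0 _
      have ht1 : (t : ℝ) ≤ 1 := by rw [← hμt]; exact hμle j
      have ht0' : (0 : ℤ) ≤ t := by exact_mod_cast ht0
      have ht1' : (t : ℤ) ≤ 1 := by exact_mod_cast ht1
      rcases (by omega : t = 0 ∨ t = 1) with h | h <;>
        [left; right] <;> rw [hμt, h] <;> norm_num
    have hex : ∃ j0, l (I3 j0) ≠ 0 := by
      by_contra h
      push_neg at h
      have : S = 0 := by rw [hSdef]; exact Finset.sum_eq_zero fun j _ => h j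
      linarith
    obtain ⟨j0, hj0⟩ := hex
    have hj1 : l (I3 j0) = 1 := (key j0).resolve_left hj0
    have hrest : ∀ i, i ≠ j0 → l (I3 i) = 0 := by
      intro i hi
      have hsplit : l (I3 j0) + ∑ i ∈ Finset.univ.erase j0, l (I3 i) = S := by
        rw [hSdef]
        exact Finset.add_sum_erase Finset.univ (fun i => l (I3 i)) (Finset.mem_univ j0)
      have hz : ∑ i ∈ Finset.univ.erase j0, l (I3 i) = 0 := by
        rw [hj1] at hsplit; linarith
      have := (Finset.sum_eq_zero_iff_of_nonneg fun i _ => hl0 (I3 i)).mp hz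
      exact this i (Finset.mem_erase.mpr ⟨hi, Finset.mem_univ i⟩)
    refine ⟨I3 j0, ?_⟩
    rw [hxl, sum_expandV (fun i => l i • genVerts k a i)]
    rw [hl0z, hI1z, hI2z]
    rw [Finset.sum_eq_single j0]
    · rw [hj1]; simp
    · intro b _ hb; rw [hrest b hb, zero_smul]
    · intro h; exact absurd (Finset.mem_univ j0) h

lemma vert_int (i : Fin (k + 3)) (c : Fin (k + 2)) : ∃ n : ℤ, genVerts k a i c = n := by
  refine Fin.cases ?_ (fun i' => ?_) i
  · exact ⟨0, by simp⟩
  refine Fin.cases ?_ (fun i'' => ?_) i'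
  · refine ⟨if c = 0 then 1 else 0, ?_⟩
    have hv := congrFun (v1 (k := k) (a := a)) c
    rw [show (Fin.succ 0 : Fin (k + 3)) = I1 from rfl, hv, Pi.single_apply]
    split_ifs <;> simp
  refine Fin.cases ?_ (fun i''' => ?_) i''
  · refine ⟨if c = 1 then 1 else 0, ?_⟩
    have hv := congrFun (v2 (k := k) (a := a)) c
    rw [show ((0 : Fin (k+1)).succ.succ : Fin (k + 3)) = I2 from rfl, hv, Pi.single_apply]
    split_ifs <;> simp
  · refine ⟨(if c = 0 then 1 else 0) + (if c = 1 then 1 else 0) +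
      (if c = i'''.succ.succ then (a i''' : ℤ) else 0), ?_⟩
    have hv := congrFun (v3 (k := k) (a := a) i''') c
    rw [show (i'''.succ.succ.succ : Fin (k + 3)) = I3 i''' from rfl, hv]
    simp only [Pi.add_apply, Pi.smul_apply, smul_eq_mul, Pi.single_apply]
    split_ifs <;> push_cast <;> ring

lemma affineIndep (ha : ∀ j, 0 < a j) : AffineIndependent ℝ (genVerts k a) := by
  rw [affineIndependent_iff_of_fintype]
  intro w hw hz
  rw [Finset.weightedVSub_eq_linear_combination _ hw] at hz
  have hS : ∀ j, w (I3 j) = 0 := by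
    intro j
    have h := congrFun hz j.succ.succ
    rw [coordS] at h
    have haj : (a j : ℝ) ≠ 0 := (Nat.cast_pos.mpr (ha j)).ne'
    simpa [haj] using h
  have hSz : ∑ j, w (I3 j) = 0 := Finset.sum_eq_zero fun j _ => hS j
  have h1 : w I1 = 0 := by
    have h := congrFun hz 0
    rw [coord0, hSz] at h
    simpa using h
  have h2 : w I2 = 0 := by
    have h := congrFun hz (Fin.succ 0)
    rw [coord1, hSz] at h
    simpa using h
  have h0 : w 0 = 0 := by
    rw [sum_expand w, hSz, h1, h2] at hw
    linarith
  intro i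
  refine Fin.cases h0 (fun i' => ?_) i
  refine Fin.cases h1 (fun i'' => ?_) i'
  refine Fin.cases h2 (fun i''' => ?_) i''
  exact hS i'''

noncomputable def eps (k : ℕ) : ℝ := 1 / (4 * (k + 2))

noncomputable def lo (k : ℕ) (a : Fin k → ℕ) : Fin (k + 2) → ℝ :=
  Fin.cons (1/2) (Fin.cons (1/2) (fun j => (a j : ℝ) * eps k))

noncomputable def hi (k : ℕ) (a : Fin k → ℕ) : Fin (k + 2) → ℝ :=
  Fin.cons (1/2 + eps k) (Fin.cons (1/2 + eps k) (fun j => (a j : ℝ) * (2 * eps k)))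

lemma box_subset (ha : ∀ j, 0 < a j) (hk : 2 ≤ k) :
    Set.Icc (lo k a) (hi k a) ⊆ convexHull ℝ (Set.range (genVerts k a)) := by
  intro y hy
  rw [Set.mem_Icc] at hy
  have hlo : ∀ c, lo k a c ≤ y c := hy.1
  have hhi : ∀ c, y c ≤ hi k a c := hy.2
  have hε : 0 < eps k := by rw [eps]; positivity
  have hεeq : eps k * (4 * ((k : ℝ) + 2)) = 1 := by rw [eps]; field_simp
  have hK2 : (2 : ℝ) ≤ k := by exact_mod_cast hk
  set μ : Fin k → ℝ := fun j => y j.succ.succ / a j with hμdef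
  set S : ℝ := ∑ j, μ j with hSdef
  have hμlb : ∀ j, eps k ≤ μ j := by
    intro j
    have h := hlo j.succ.succ
    simp only [lo, Fin.cons_succ] at h
    have haj : (0 : ℝ) < a j := Nat.cast_pos.mpr (ha j)
    rw [hμdef, le_div_iff₀ haj]
    linarith [h]
  have hμub : ∀ j, μ j ≤ 2 * eps k := by
    intro j
    have h := hhi j.succ.succ
    simp only [hi, Fin.cons_succ] at h
    have haj : (0 : ℝ) < a j := Nat.cast_pos.mpr (ha j)
    rw [hμdef, div_le_iff₀ haj]
    linarith [h]
  have hSl : (k : ℝ) * eps k ≤ S := by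
    have := Finset.sum_le_sum (s := Finset.univ) fun j (_ : j ∈ Finset.univ) => hμlb j
    simpa [Finset.sum_const, nsmul_eq_mul, mul_comm] using this
  have hSu : S ≤ (k : ℝ) * (2 * eps k) := by
    have := Finset.sum_le_sum (s := Finset.univ) fun j (_ : j ∈ Finset.univ) => hμub j
    simpa [Finset.sum_const, nsmul_eq_mul, mul_comm] using this
  have hhalf : (k : ℝ) * (2 * eps k) ≤ 1/2 := by nlinarith
  have h2ε : 2 * eps k ≤ (k : ℝ) * eps k := by nlinarith
  have hy0l : 1/2 ≤ y 0 := by simpa [lo] using hlo 0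
  have hy0u : y 0 ≤ 1/2 + eps k := by simpa [hi] using hhi 0
  have hy1l : 1/2 ≤ y (Fin.succ 0) := by simpa [lo, Fin.cons_succ] using hlo (Fin.succ 0)
  have hy1u : y (Fin.succ 0) ≤ 1/2 + eps k := by
    simpa [hi, Fin.cons_succ] using hhi (Fin.succ 0)
  set l : Fin (k + 3) → ℝ :=
    Fin.cons (1 - (y 0 + y (Fin.succ 0) - S))
      (Fin.cons (y 0 - S) (Fin.cons (y (Fin.succ 0) - S) μ)) with hldef
  have hl1 : l I1 = y 0 - S := rfl
  have hl2 : l I2 = y (Fin.succ 0) - S := rfl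
  have hl3 : ∀ j, l (I3 j) = μ j := fun j => rfl
  have hl0' : l 0 = 1 - (y 0 + y (Fin.succ 0) - S) := rfl
  refine mem_convexHull_of_exists_fintype l (genVerts k a) ?_ ?_
    (fun i => Set.mem_range_self i) ?_
  · intro i
    refine Fin.cases ?_ (fun i' => ?_) i
    · rw [hl0']; linarith
    refine Fin.cases ?_ (fun i'' => ?_) i'
    · show (0:ℝ) ≤ l I1
      rw [hl1]; linarith
    refine Fin.cases ?_ (fun i''' => ?_) i''
    · show (0:ℝ) ≤ l I2
      rw [hl2]; linarith
    · show (0:ℝ) ≤ l (I3 i''')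
      rw [hl3 i''']; linarith [hμlb i''']
  · rw [sum_expand l, hl0', hl1, hl2]
    have : ∑ j, l (I3 j) = S := by rw [hSdef]; exact Finset.sum_congr rfl fun j _ => hl3 j
    rw [this]; ring
  · funext c
    refine Fin.cases ?_ (fun c' => ?_) c
    · rw [coord0 l, hl1]
      have : ∑ j, l (I3 j) = S := Finset.sum_congr rfl fun j _ => hl3 j
      rw [this]; ring
    refine Fin.cases ?_ (fun c'' => ?_) c'
    · rw [coord1 l, hl2]
      have : ∑ j, l (I3 j) = S := Finset.sum_congr rfl fun j _ => hl3 j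
      rw [this]; ring
    · rw [coordS l c'', hl3 c'', hμdef]
      have haj : (a c'' : ℝ) ≠ 0 := (Nat.cast_pos.mpr (ha c'')).ne'
      rw [mul_comm, div_mul_cancel₀ _ haj]

end genVerts

open genVerts MeasureTheory in
theorem part1 (d : ℕ) (hd : 4 ≤ d) (N : ℝ) (hN : 0 < N) :
    ∃ v : Fin (d + 1) → (Fin d → ℝ),
      AffineIndependent ℝ v ∧ (∀ i j, ∃ n : ℤ, v i j = n) ∧
      (∀ x ∈ convexHull ℝ (Set.range v), (∀ j, ∃ n : ℤ, x j = n) → ∃ i, x = v i) ∧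
      N < (MeasureTheory.volume (convexHull ℝ (Set.range v))).toReal := by
  obtain ⟨k', rfl⟩ : ∃ k', d = k' + 2 + 2 := ⟨d - 4, by omega⟩
  set k : ℕ := k' + 2 with hkdef
  have hε : 0 < eps k := by rw [eps]; positivity
  have hpow : 0 < eps k ^ (k + 2) := pow_pos hε _
  obtain ⟨m, hm⟩ := exists_nat_gt (N / eps k ^ (k + 2))
  have hNm : N < m * eps k ^ (k + 2) := (div_lt_iff₀ hpow).mp hm
  set a : Fin k → ℕ := Fin.cons (m + 1) (Fin.cons (m + 2) (fun _ => 1)) with hadef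
  have ha : ∀ j, 0 < a j := by
    intro j
    refine Fin.cases ?_ (fun j' => ?_) j
    · simp [hadef]
    refine Fin.cases ?_ (fun j'' => ?_) j'
    · show 0 < m + 2; omega
    · show (0:ℕ) < 1; omega
  have hcop12 : Nat.Coprime (m + 1) (m + 2) := by
    have h : 1 + (m + 1) = m + 2 := by omega
    exact h ▸ Nat.coprime_add_self_right.mpr (Nat.coprime_one_right _)
  have hco : ∀ i j, i ≠ j → Nat.Coprime (a i) (a j) := by
    intro i j hij
    rcases Fin.eq_zero_or_eq_succ i with rfl | ⟨i', rfl⟩ <;>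
      rcases Fin.eq_zero_or_eq_succ j with rfl | ⟨j', rfl⟩
    · exact absurd rfl hij
    · rcases Fin.eq_zero_or_eq_succ j' with rfl | ⟨j'', rfl⟩
      · exact hcop12
      · exact Nat.coprime_one_right _
    · rcases Fin.eq_zero_or_eq_succ i' with rfl | ⟨i'', rfl⟩
      · exact hcop12.symm
      · exact Nat.coprime_one_left _
    · rcases Fin.eq_zero_or_eq_succ i' with rfl | ⟨i'', rfl⟩ <;>
        rcases Fin.eq_zero_or_eq_succ j' with rfl | ⟨j'', rfl⟩
      · exact absurd rfl hij
      · exact Nat.coprime_one_right _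
      · exact Nat.coprime_one_left _
      · exact Nat.coprime_one_left _
  refine ⟨genVerts k a, affineIndep ha, fun i j => vert_int i j, hollow k a ha hco, ?_⟩
  -- volume bound
  have hfin : volume (convexHull ℝ (Set.range (genVerts k a))) ≠ ⊤ :=
    ((Set.finite_range (genVerts k a)).isCompact_convexHull ℝ).measure_lt_top.ne
  have hmono : volume (Set.Icc (lo k a) (hi k a))
      ≤ volume (convexHull ℝ (Set.range (genVerts k a))) :=
    measure_mono (box_subset ha (by omega))
  have hnn : ∀ c ∈ Finset.univ, (0:ℝ) ≤ hi k a c - lo k a c := by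
    intro c _
    refine Fin.cases ?_ (fun c' => ?_) c
    · show (0:ℝ) ≤ (1/2 + eps k) - 1/2; linarith
    refine Fin.cases ?_ (fun c'' => ?_) c'
    · show (0:ℝ) ≤ (1/2 + eps k) - 1/2; linarith
    · show (0:ℝ) ≤ (a c'' : ℝ) * (2 * eps k) - (a c'' : ℝ) * eps k
      have : (0:ℝ) ≤ (a c'' : ℝ) := Nat.cast_nonneg _
      nlinarith
  have hIcc : volume (Set.Icc (lo k a) (hi k a))
      = ENNReal.ofReal (∏ c, (hi k a c - lo k a c)) := by
    rw [Real.volume_Icc_pi, ← ENNReal.ofReal_prod_of_nonneg hnn]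
  have hprodA : (∏ j, (a j : ℝ)) = ((m:ℝ) + 1) * ((m:ℝ) + 2) := by
    rw [Fin.prod_univ_succ, Fin.prod_univ_succ]
    simp [hadef, Fin.cons_succ, Fin.cons_zero]
    try push_cast
    try ring
  have hprod : (∏ c, (hi k a c - lo k a c))
      = ((m:ℝ) + 1) * ((m:ℝ) + 2) * eps k ^ (k + 2) := by
    rw [Fin.prod_univ_succ, Fin.prod_univ_succ]
    have h0 : hi k a 0 - lo k a 0 = eps k := by
      show (1/2 + eps k) - 1/2 = eps k; ring
    have h1 : hi k a (Fin.succ 0) - lo k a (Fin.succ 0) = eps k := by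
      show (1/2 + eps k) - 1/2 = eps k; ring
    have h2 : ∀ j : Fin k, hi k a j.succ.succ - lo k a j.succ.succ = (a j : ℝ) * eps k := by
      intro j
      show (a j : ℝ) * (2 * eps k) - (a j : ℝ) * eps k = _; ring
    rw [h0]
    have : ∀ c' : Fin (k+1), (fun c => hi k a c - lo k a c) c'.succ
        = hi k a c'.succ - lo k a c'.succ := fun _ => rfl
    rw [h1]
    have h3 : (∏ j : Fin k, (hi k a j.succ.succ - lo k a j.succ.succ))
        = (∏ j, (a j : ℝ)) * eps k ^ k := by
      rw [Finset.prod_congr rfl fun j _ => h2 j, Finset.prod_mul_distrib]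
      simp [Finset.prod_const]
    rw [h3, hprodA]; ring
  have hprodpos : 0 < ((m:ℝ) + 1) * ((m:ℝ) + 2) * eps k ^ (k + 2) := by positivity
  have hNlt : N < ∏ c, (hi k a c - lo k a c) := by
    rw [hprod]
    have hm0 : (0:ℝ) ≤ m := Nat.cast_nonneg m
    nlinarith
  have hoflt : ENNReal.ofReal N < volume (convexHull ℝ (Set.range (genVerts k a))) := by
    refine lt_of_lt_of_le ?_ hmono
    rw [hIcc]
    exact (ENNReal.ofReal_lt_ofReal_iff (by rw [hprod]; exact hprodpos)).mpr hNlt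
  have := (ENNReal.toReal_lt_toReal ENNReal.ofReal_ne_top hfin).mpr hoflt
  rwa [ENNReal.toReal_ofReal hN.le] at this

set_option maxHeartbeats 1000000 in
theorem reeve_det (a b c : ℕ) :
    |(Matrix.of (fun i j : Fin 5 =>
        reeveVerts a b c i.succ j - reeveVerts a b c 0 j)).det| = (a * b * c : ℝ) := by
  have h : (Matrix.of (fun i j : Fin 5 =>
      reeveVerts a b c i.succ j - reeveVerts a b c 0 j)).det = (a * b * c : ℝ) := by
    simp [Matrix.det_succ_row_zero, Fin.sum_univ_succ, reeveVerts, Pi.single_apply,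
      Fin.succ_ne_zero, sub_eq_iff_eq_add]
    norm_num [Fin.ext_iff, Fin.succAbove, Fin.lt_def]
    ring
    try ring
  rw [h, abs_of_nonneg (by positivity)]

theorem reeve_eq_genVerts (a b c : ℕ) : reeveVerts a b c = genVerts 3 ![a, b, c] := by
  funext i
  fin_cases i <;> rfl

/-- For `d ≥ 4` and any `N > 0` there is a lattice `d`-simplex whose only lattice points
are its vertices and whose volume exceeds `N`.  Concretely, for pairwise coprime positive
`a, b, c`, the simplex `conv(0, e₁, e₂, e₁+e₂+a·e₃, e₁+e₂+b·e₄, e₁+e₂+c·e₅) ⊆ ℝ^5`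
contains no lattice points other than its six vertices, while its normalized volume is
`a·b·c`. -/
theorem large_hollow_simplices :
    (∀ d : ℕ, 4 ≤ d → ∀ N : ℝ, 0 < N → ∃ v : Fin (d + 1) → (Fin d → ℝ),
        AffineIndependent ℝ v ∧ (∀ i j, ∃ n : ℤ, v i j = n) ∧
        (∀ x ∈ convexHull ℝ (Set.range v), (∀ j, ∃ n : ℤ, x j = n) → ∃ i, x = v i) ∧
        N < (MeasureTheory.volume (convexHull ℝ (Set.range v))).toReal) ∧
    (∀ a b c : ℕ, 0 < a → 0 < b → 0 < c →
      Nat.Coprime a b → Nat.Coprime a c → Nat.Coprime b c →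
      (∀ x ∈ convexHull ℝ (Set.range (reeveVerts a b c)),
          (∀ j, ∃ n : ℤ, x j = n) → ∃ i, x = reeveVerts a b c i) ∧
      |(Matrix.of (fun i j : Fin 5 =>
          reeveVerts a b c i.succ j - reeveVerts a b c 0 j)).det| = (a * b * c : ℝ)) := by
  refine ⟨part1, ?_⟩
  intro a b c ha hb hc hab hac hbc
  refine ⟨?_, reeve_det a b c⟩
  have ha' : ∀ j, 0 < (![a, b, c] : Fin 3 → ℕ) j := by
    intro j; fin_cases j <;> simpa
  have hco' : ∀ i j, i ≠ j → Nat.Coprime ((![a, b, c] : Fin 3 → ℕ) i) (![a, b, c] j) := by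
    intro i j hij
    fin_cases i <;> fin_cases j <;>
      first
        | exact absurd rfl hij
        | simpa using hab
        | simpa using hab.symm
        | simpa using hac
        | simpa using hac.symm
        | simpa using hbc
        | simpa using hbc.symm
  intro x hx hint
  rw [reeve_eq_genVerts] at hx ⊢
  exact genVerts.hollow 3 ![a, b, c] ha' hco' x hx hint
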